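/- Let D₀ = D₁ ×_e D₂ where D₁ and D₂ are open domains in ℂ(i₁), and let (F, G) be an i₂e-generating pair on D₀. If w : D₀ → 𝕋 is (F,G)_j-pseudoanalytic on D₀, then w(z₁ + z₂i₂) = w_{e1}(z₁ − z₂i₁)e₁ + w_{e2}(z₁ + z₂i₁)e₂ where w_{e1} is an (F_{e1}, G_{e1})-pseudoanalytic function on D₁ and w_{e2} is an (F_{e2}, G_{e2})-pseudoanalytic function on D₂; moreover the derivatives satisfy ẇ(z₁ + z₂i₂) = ẇ_{e1}(z₁ − z₂i₁)e₁ + ẇ_{e2}(z₁ + z₂i₁)e₂ on D₀. -/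

import Mathlib

noncomputable section

open Complex Filter Topology

/-- The bicomplex numbers `𝕋 = {z₁ + z₂ i₂ : z₁, z₂ ∈ ℂ(i₁)}`, represented by the pair
of `ℂ(i₁)`-components `(z₁, z₂)`. -/
@[ext] structure Bicomplex : Type where
  z1 : ℂ
  z2 : ℂ

namespace Bicomplex

instance : Zero Bicomplex := ⟨⟨0, 0⟩⟩
instance : One Bicomplex := ⟨⟨1, 0⟩⟩
instance : Add Bicomplex := ⟨fun w v => ⟨w.z1 + v.z1, w.z2 + v.z2⟩⟩
instance : Neg Bicomplex := ⟨fun w => ⟨-w.z1, -w.z2⟩⟩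
instance : Mul Bicomplex := ⟨fun w v => ⟨w.z1 * v.z1 - w.z2 * v.z2, w.z1 * v.z2 + w.z2 * v.z1⟩⟩

@[simp] lemma zero_z1 : (0 : Bicomplex).z1 = 0 := rfl
@[simp] lemma zero_z2 : (0 : Bicomplex).z2 = 0 := rfl
@[simp] lemma one_z1 : (1 : Bicomplex).z1 = 1 := rfl
@[simp] lemma one_z2 : (1 : Bicomplex).z2 = 0 := rfl
@[simp] lemma add_z1 (w v : Bicomplex) : (w + v).z1 = w.z1 + v.z1 := rfl
@[simp] lemma add_z2 (w v : Bicomplex) : (w + v).z2 = w.z2 + v.z2 := rfl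
@[simp] lemma neg_z1 (w : Bicomplex) : (-w).z1 = -w.z1 := rfl
@[simp] lemma neg_z2 (w : Bicomplex) : (-w).z2 = -w.z2 := rfl
@[simp] lemma mul_z1 (w v : Bicomplex) : (w * v).z1 = w.z1 * v.z1 - w.z2 * v.z2 := rfl
@[simp] lemma mul_z2 (w v : Bicomplex) : (w * v).z2 = w.z1 * v.z2 + w.z2 * v.z1 := rfl

/-- The bicomplex numbers form a commutative ring. -/
instance : CommRing Bicomplex where
  nsmul n w := ⟨n • w.z1, n • w.z2⟩
  zsmul n w := ⟨n • w.z1, n • w.z2⟩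
  nsmul_zero a := by ext <;> exact zero_smul ℕ _
  nsmul_succ n a := by
    ext
    · exact succ_nsmul a.z1 n
    · exact succ_nsmul a.z2 n
  zsmul_zero' a := by ext <;> exact zero_smul ℤ _
  zsmul_succ' n a := by
    ext
    · exact (by simp; ring : ((n.succ : ℤ) • a.z1) = (n : ℤ) • a.z1 + a.z1)
    · exact (by simp; ring : ((n.succ : ℤ) • a.z2) = (n : ℤ) • a.z2 + a.z2)
  zsmul_neg' n a := by
    ext
    · exact (by simp; ring : (Int.negSucc n • a.z1) = -((n.succ : ℤ) • a.z1))
    · exact (by simp; ring : (Int.negSucc n • a.z2) = -((n.succ : ℤ) • a.z2))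
  add_assoc a b c := by ext <;> simp <;> ring
  zero_add a := by ext <;> simp
  add_zero a := by ext <;> simp
  add_comm a b := by ext <;> simp <;> ring
  neg_add_cancel a := by ext <;> simp
  mul_assoc a b c := by ext <;> simp <;> ring
  one_mul a := by ext <;> simp
  mul_one a := by ext <;> simp
  left_distrib a b c := by ext <;> simp <;> ring
  right_distrib a b c := by ext <;> simp <;> ring
  zero_mul a := by ext <;> simp
  mul_zero a := by ext <;> simp
  mul_comm a b := by ext <;> simp <;> ring

/-- Inverse: `w⁻¹ = w†₂ / (z₁² + z₂²)` (junk value `0/0` on the null-cone). -/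
instance : Inv Bicomplex :=
  ⟨fun w => ⟨w.z1 / (w.z1 ^ 2 + w.z2 ^ 2), -w.z2 / (w.z1 ^ 2 + w.z2 ^ 2)⟩⟩

instance : Div Bicomplex := ⟨fun w v => w * v⁻¹⟩

/-- Embedding of `ℂ(i₁)` into `𝕋`. -/
def ofComplex (c : ℂ) : Bicomplex := ⟨c, 0⟩

/-- Embedding of `ℝ` into `𝕋`. -/
def ofReal (t : ℝ) : Bicomplex := ⟨(t : ℂ), 0⟩

/-- The imaginary unit `i₁`. -/
def i1 : Bicomplex := ⟨Complex.I, 0⟩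

/-- The imaginary unit `i₂`. -/
def i2 : Bicomplex := ⟨0, 1⟩

/-- The hyperbolic unit `j = i₁ i₂`. -/
def jj : Bicomplex := ⟨0, Complex.I⟩

/-- The idempotent `e₁ = (1 + j)/2`. -/
def e1 : Bicomplex := ⟨1 / 2, Complex.I / 2⟩

/-- The idempotent `e₂ = (1 - j)/2`. -/
def e2 : Bicomplex := ⟨1 / 2, -(Complex.I) / 2⟩

/-- The projection `P₁(z₁ + z₂ i₂) = z₁ - z₂ i₁`. -/
def P1 (w : Bicomplex) : ℂ := w.z1 - w.z2 * Complex.I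

/-- The projection `P₂(z₁ + z₂ i₂) = z₁ + z₂ i₁`. -/
def P2 (w : Bicomplex) : ℂ := w.z1 + w.z2 * Complex.I

/-- The conjugation `w†₁ = z̄₁ + z̄₂ i₂`. -/
def dag1 (w : Bicomplex) : Bicomplex := ⟨(starRingEnd ℂ) w.z1, (starRingEnd ℂ) w.z2⟩

/-- The conjugation `w†₂ = z₁ - z₂ i₂`. -/
def dag2 (w : Bicomplex) : Bicomplex := ⟨w.z1, -w.z2⟩

/-- The conjugation `w†₃ = z̄₁ - z̄₂ i₂`. -/
def dag3 (w : Bicomplex) : Bicomplex := ⟨(starRingEnd ℂ) w.z1, -((starRingEnd ℂ) w.z2)⟩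

/-- `𝕋` as `ℂ × ℂ`. -/
def toProd (w : Bicomplex) : ℂ × ℂ := (w.z1, w.z2)

/-- `ℂ × ℂ` as `𝕋`. -/
def ofProd (p : ℂ × ℂ) : Bicomplex := ⟨p.1, p.2⟩

instance : TopologicalSpace Bicomplex := TopologicalSpace.induced toProd inferInstance

/-- The set of points `w` such that `w - w₀` is invertible (i.e. not a zero divisor). -/
def invertibleDiff (w₀ : Bicomplex) : Set Bicomplex :=
  {w | (w - w₀).z1 ^ 2 + (w - w₀).z2 ^ 2 ≠ 0}

/-- `f` is `𝕋`-differentiable at `w₀` with derivative `d`: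
`(f w - f w₀)/(w - w₀) → d` as `w → w₀` with `w - w₀` invertible. -/
def HasTDerivAt (f : Bicomplex → Bicomplex) (d w₀ : Bicomplex) : Prop :=
  Tendsto (fun w => (f w - f w₀) / (w - w₀)) (𝓝[invertibleDiff w₀] w₀) (𝓝 d)

/-- `f` is `𝕋`-holomorphic on `U` if it is `𝕋`-differentiable at each point of `U`. -/
def THolomorphicOn (f : Bicomplex → Bicomplex) (U : Set Bicomplex) : Prop :=
  ∀ w ∈ U, ∃ d, HasTDerivAt f d w

/-- `f` viewed as a map `ℂ² → ℂ²`. -/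
def fProd (f : Bicomplex → Bicomplex) : ℂ × ℂ → ℂ × ℂ := fun p => toProd (f (ofProd p))

/-- `f : 𝕋 → 𝕋` is `n` times continuously (real-)differentiable on `U`. -/
def TContDiffOn (n : ℕ∞) (f : Bicomplex → Bicomplex) (U : Set Bicomplex) : Prop :=
  ContDiffOn ℝ n (fProd f) (toProd '' U)

/-- `g : 𝕋 → ℂ` is `n` times continuously (real-)differentiable on `U`. -/
def CContDiffOn (n : ℕ∞) (g : Bicomplex → ℂ) (U : Set Bicomplex) : Prop :=
  ContDiffOn ℝ n (fun p => g (ofProd p)) (toProd '' U)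

/-- Real partial derivative of `g : 𝕋 → ℂ` at `w` in direction `e`. -/
def pd (e : Bicomplex) (g : Bicomplex → ℂ) (w : Bicomplex) : ℂ :=
  deriv (fun t : ℝ => g (w + ofReal t * e)) 0

/-- Existence of the real partial derivative of `g : 𝕋 → ℂ` at `w` in direction `e`. -/
def pdExists (e : Bicomplex) (g : Bicomplex → ℂ) (w : Bicomplex) : Prop :=
  DifferentiableAt ℝ (fun t : ℝ => g (w + ofReal t * e)) 0

/-- The scalar (`ℂ(i₁)`-) component `f₁` of `f = f₁ + f₂ i₂`. -/
def s1 (f : Bicomplex → Bicomplex) : Bicomplex → ℂ := fun w => (f w).z1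

/-- The vectorial (`ℂ(i₁)`-) component `f₂` of `f = f₁ + f₂ i₂`. -/
def s2 (f : Bicomplex → Bicomplex) : Bicomplex → ℂ := fun w => (f w).z2

/-- Real partial derivative of `f : 𝕋 → 𝕋` in direction `e`. -/
def pdT (e : Bicomplex) (f : Bicomplex → Bicomplex) : Bicomplex → Bicomplex :=
  fun w => ⟨pd e (s1 f) w, pd e (s2 f) w⟩

/-- Existence of the real partial derivative of `f : 𝕋 → 𝕋` in direction `e`. -/
def pdTExists (e : Bicomplex) (f : Bicomplex → Bicomplex) (w : Bicomplex) : Prop :=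
  pdExists e (s1 f) w ∧ pdExists e (s2 f) w

/-- `∂_{z₁} g = ½(∂ₓ g - i₁ ∂_y g)` for `g : 𝕋 → ℂ`. -/
def dz1 (g : Bicomplex → ℂ) : Bicomplex → ℂ :=
  fun w => (pd 1 g w - Complex.I * pd i1 g w) / 2

/-- `∂_{z̄₁} g = ½(∂ₓ g + i₁ ∂_y g)` for `g : 𝕋 → ℂ`. -/
def dz1bar (g : Bicomplex → ℂ) : Bicomplex → ℂ :=
  fun w => (pd 1 g w + Complex.I * pd i1 g w) / 2

/-- `∂_{z₂} g = ½(∂_p g - i₁ ∂_q g)` for `g : 𝕋 → ℂ`. -/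
def dz2 (g : Bicomplex → ℂ) : Bicomplex → ℂ :=
  fun w => (pd i2 g w - Complex.I * pd jj g w) / 2

/-- `∂_{z̄₂} g = ½(∂_p g + i₁ ∂_q g)` for `g : 𝕋 → ℂ`. -/
def dz2bar (g : Bicomplex → ℂ) : Bicomplex → ℂ :=
  fun w => (pd i2 g w + Complex.I * pd jj g w) / 2

/-- `∂_{z₁}` applied componentwise to `f : 𝕋 → 𝕋`. -/
def dZ1 (f : Bicomplex → Bicomplex) : Bicomplex → Bicomplex :=
  fun w => ⟨dz1 (s1 f) w, dz1 (s2 f) w⟩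

/-- `∂_{z₂}` applied componentwise to `f : 𝕋 → 𝕋`. -/
def dZ2 (f : Bicomplex → Bicomplex) : Bicomplex → Bicomplex :=
  fun w => ⟨dz2 (s1 f) w, dz2 (s2 f) w⟩

/-- `∂_{z̄₁}` applied componentwise to `f : 𝕋 → 𝕋`. -/
def dZ1bar (f : Bicomplex → Bicomplex) : Bicomplex → Bicomplex :=
  fun w => ⟨dz1bar (s1 f) w, dz1bar (s2 f) w⟩

/-- `∂_{z̄₂}` applied componentwise to `f : 𝕋 → 𝕋`. -/
def dZ2bar (f : Bicomplex → Bicomplex) : Bicomplex → Bicomplex :=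
  fun w => ⟨dz2bar (s1 f) w, dz2bar (s2 f) w⟩

/-- `∂_ω = ½(∂_{z₁} - i₂ ∂_{z₂})`. -/
def dOm (f : Bicomplex → Bicomplex) : Bicomplex → Bicomplex :=
  fun w => ofComplex (1 / 2) * (dZ1 f w - i2 * dZ2 f w)

/-- `∂_{ω†₂} = ∂_ω̄ = ½(∂_{z₁} + i₂ ∂_{z₂})`. -/
def dOmBar (f : Bicomplex → Bicomplex) : Bicomplex → Bicomplex :=
  fun w => ofComplex (1 / 2) * (dZ1 f w + i2 * dZ2 f w)

/-- `∂_{ω†₁} = ½(∂_{z̄₁} - i₂ ∂_{z̄₂})`. -/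
def dOmDag1 (f : Bicomplex → Bicomplex) : Bicomplex → Bicomplex :=
  fun w => ofComplex (1 / 2) * (dZ1bar f w - i2 * dZ2bar f w)

/-- `∂_{ω†₃} = ½(∂_{z̄₁} + i₂ ∂_{z̄₂})`. -/
def dOmDag3 (f : Bicomplex → Bicomplex) : Bicomplex → Bicomplex :=
  fun w => ofComplex (1 / 2) * (dZ1bar f w + i2 * dZ2bar f w)

/-- The complexified Laplacian `Δ_ℂ = ∂²_{z₁} + ∂²_{z₂}` acting on `ℂ(i₁)`-valued functions. -/
def lapC (g : Bicomplex → ℂ) : Bicomplex → ℂ :=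
  fun w => dz1 (dz1 g) w + dz2 (dz2 g) w

/-- The vector part in the `i₂`-representation `w = ζ₁ + ζ₂ i₁` with `ζ₁, ζ₂ ∈ ℂ(i₂)`:
for `w = x₁ + x₂i₁ + x₃i₂ + x₄j`, `Vec(w) = x₂ + x₄ i₂`, encoded as the complex number
`x₂ + x₄ i`. -/
def vec2 (w : Bicomplex) : ℂ := ⟨w.z1.im, w.z2.im⟩

/-- Embedding of `ℂ(i₂)` into `𝕋`: the complex number `a + b i` represents `a + b i₂`. -/
def ofC2 (c : ℂ) : Bicomplex := ⟨(c.re : ℂ), (c.im : ℂ)⟩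

/-- Multiplication of hyperbolic numbers `ℂ(j) = {x + yj}`, encoded as pairs in `ℝ × ℝ`. -/
def hmul (a b : ℝ × ℝ) : ℝ × ℝ := (a.1 * b.1 + a.2 * b.2, a.1 * b.2 + a.2 * b.1)

/-- Division of hyperbolic numbers (junk value when the denominator is a zero divisor). -/
def hdiv (a b : ℝ × ℝ) : ℝ × ℝ :=
  hmul a (b.1 / (b.1 ^ 2 - b.2 ^ 2), -b.2 / (b.1 ^ 2 - b.2 ^ 2))

/-- Embedding of the hyperbolic numbers `ℂ(j)` into `𝕋`: `(x, y) ↦ x + y j`. -/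
def ofHyp (a : ℝ × ℝ) : Bicomplex := ⟨(a.1 : ℂ), (a.2 : ℂ) * Complex.I⟩

/-- The vector part in the `j`-representation `w = ζ₁ + ζ₂ i₁` with `ζ₁, ζ₂ ∈ ℂ(j)`:
for `w = x₁ + x₂i₁ + x₃i₂ + x₄j`, `Vec(w) = x₂ - x₃ j`, encoded as the pair `(x₂, -x₃)`. -/
def vec3 (w : Bicomplex) : ℝ × ℝ := (w.z1.im, -w.z2.re)

/-- The `𝕋`-cartesian set `X₁ ×ₑ X₂ = {w : P₁ w ∈ X₁ ∧ P₂ w ∈ X₂}`. -/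
def eProd (X₁ X₂ : Set ℂ) : Set Bicomplex := {w | P1 w ∈ X₁ ∧ P2 w ∈ X₂}

/-- `(F, G)` is an `i₁`-generating pair on `D`. -/
def GenPair1 (F G : Bicomplex → Bicomplex) (D : Set Bicomplex) : Prop :=
  TContDiffOn 2 F D ∧ TContDiffOn 2 G D ∧ ∀ w ∈ D, (dag2 (F w) * G w).z2 ≠ 0

/-- `(F, G)` is an `i₂`-generating pair on `D`. -/
def GenPair2 (F G : Bicomplex → Bicomplex) (D : Set Bicomplex) : Prop :=
  TContDiffOn 2 F D ∧ TContDiffOn 2 G D ∧ ∀ w ∈ D, vec2 (dag1 (F w) * G w) ≠ 0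

/-- `(F, G)` is a `j`-generating pair on `D`. -/
def GenPairJ (F G : Bicomplex → Bicomplex) (D : Set Bicomplex) : Prop :=
  TContDiffOn 2 F D ∧ TContDiffOn 2 G D ∧ ∀ w ∈ D, vec3 (dag3 (F w) * G w) ≠ 0

/-- The unique `λ₀ ∈ ℂ(i₁)` with `w(ω₀) = λ₀ F(ω₀) + μ₀ G(ω₀)`. -/
def lam1 (F G wf : Bicomplex → Bicomplex) (ω₀ : Bicomplex) : ℂ :=
  (dag2 (wf ω₀) * G ω₀).z2 / (dag2 (F ω₀) * G ω₀).z2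

/-- The unique `μ₀ ∈ ℂ(i₁)` with `w(ω₀) = λ₀ F(ω₀) + μ₀ G(ω₀)`. -/
def mu1 (F G wf : Bicomplex → Bicomplex) (ω₀ : Bicomplex) : ℂ :=
  -((dag2 (wf ω₀) * F ω₀).z2 / (dag2 (F ω₀) * G ω₀).z2)

/-- `w` has `(F,G)_{i₁}`-derivative `d` at `ω₀`. -/
def HasFGDeriv1 (F G wf : Bicomplex → Bicomplex) (d ω₀ : Bicomplex) : Prop :=
  Tendsto
    (fun ω => (wf ω - ofComplex (lam1 F G wf ω₀) * F ω - ofComplex (mu1 F G wf ω₀) * G ω)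
        / (ω - ω₀))
    (𝓝[invertibleDiff ω₀] ω₀) (𝓝 d)

/-- The unique `λ₀ ∈ ℂ(j)` with `w(ω₀) = λ₀ F(ω₀) + μ₀ G(ω₀)`. -/
def lamJ (F G wf : Bicomplex → Bicomplex) (ω₀ : Bicomplex) : ℝ × ℝ :=
  hdiv (vec3 (dag3 (wf ω₀) * G ω₀)) (vec3 (dag3 (F ω₀) * G ω₀))

/-- The unique `μ₀ ∈ ℂ(j)` with `w(ω₀) = λ₀ F(ω₀) + μ₀ G(ω₀)`. -/
def muJ (F G wf : Bicomplex → Bicomplex) (ω₀ : Bicomplex) : ℝ × ℝ :=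
  -(hdiv (vec3 (dag3 (wf ω₀) * F ω₀)) (vec3 (dag3 (F ω₀) * G ω₀)))

/-- `w` has `(F,G)_j`-derivative `d` at `ω₀`. -/
def HasFGDerivJ (F G wf : Bicomplex → Bicomplex) (d ω₀ : Bicomplex) : Prop :=
  Tendsto
    (fun ω => (wf ω - ofHyp (lamJ F G wf ω₀) * F ω - ofHyp (muJ F G wf ω₀) * G ω) / (ω - ω₀))
    (𝓝[invertibleDiff ω₀] ω₀) (𝓝 d)

/-- `w` is `(F,G)_j`-pseudoanalytic on `D`. -/
def PseudoanalyticJ (F G wf : Bicomplex → Bicomplex) (D : Set Bicomplex) : Prop :=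
  ∀ ω ∈ D, ∃ d, HasFGDerivJ F G wf d ω

/-- `w` has continuous partial derivatives in a neighborhood of `ω₀`. -/
def HasContPartialsNear (f : Bicomplex → Bicomplex) (w₀ : Bicomplex) : Prop :=
  ∃ V ∈ 𝓝 w₀, ∀ e ∈ ({1, i1, i2, jj} : Set Bicomplex),
    (∀ w ∈ V, pdTExists e f w) ∧ ContinuousOn (pdT e f) V

/-! Characteristic coefficients with respect to the `†₂` conjugation (`i₁` case). -/

def denom2 (F G : Bicomplex → Bicomplex) (w : Bicomplex) : Bicomplex :=
  F w * dag2 (G w) - dag2 (F w) * G w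

def aCoef2₁ (F G : Bicomplex → Bicomplex) (w : Bicomplex) : Bicomplex :=
  -((dag1 (F w) * dOmDag1 G w - dOmDag1 F w * dag1 (G w)) / denom2 F G w)

def bCoef2₁ (F G : Bicomplex → Bicomplex) (w : Bicomplex) : Bicomplex :=
  (F w * dOmDag1 G w - dOmDag1 F w * G w) / denom2 F G w

def aCoef2₂ (F G : Bicomplex → Bicomplex) (w : Bicomplex) : Bicomplex :=
  -((dag2 (F w) * dOmBar G w - dOmBar F w * dag2 (G w)) / denom2 F G w)

def bCoef2₂ (F G : Bicomplex → Bicomplex) (w : Bicomplex) : Bicomplex :=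
  (F w * dOmBar G w - dOmBar F w * G w) / denom2 F G w

def aCoef2₃ (F G : Bicomplex → Bicomplex) (w : Bicomplex) : Bicomplex :=
  -((dag3 (F w) * dOmDag3 G w - dOmDag3 F w * dag3 (G w)) / denom2 F G w)

def bCoef2₃ (F G : Bicomplex → Bicomplex) (w : Bicomplex) : Bicomplex :=
  (F w * dOmDag3 G w - dOmDag3 F w * G w) / denom2 F G w

def Acoef2 (F G : Bicomplex → Bicomplex) (w : Bicomplex) : Bicomplex :=
  -((dag2 (F w) * dOm G w - dOm F w * dag2 (G w)) / denom2 F G w)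

def Bcoef2 (F G : Bicomplex → Bicomplex) (w : Bicomplex) : Bicomplex :=
  (F w * dOm G w - dOm F w * G w) / denom2 F G w

/-! Characteristic coefficients with respect to the `†₃` conjugation (`j` case). -/

def denom3 (F G : Bicomplex → Bicomplex) (w : Bicomplex) : Bicomplex :=
  F w * dag3 (G w) - dag3 (F w) * G w

def aCoef3₁ (F G : Bicomplex → Bicomplex) (w : Bicomplex) : Bicomplex :=
  -((dag1 (F w) * dOmDag1 G w - dOmDag1 F w * dag1 (G w)) / denom3 F G w)

def bCoef3₁ (F G : Bicomplex → Bicomplex) (w : Bicomplex) : Bicomplex :=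
  (F w * dOmDag1 G w - dOmDag1 F w * G w) / denom3 F G w

def aCoef3₂ (F G : Bicomplex → Bicomplex) (w : Bicomplex) : Bicomplex :=
  -((dag2 (F w) * dOmBar G w - dOmBar F w * dag2 (G w)) / denom3 F G w)

def bCoef3₂ (F G : Bicomplex → Bicomplex) (w : Bicomplex) : Bicomplex :=
  (F w * dOmBar G w - dOmBar F w * G w) / denom3 F G w

def aCoef3₃ (F G : Bicomplex → Bicomplex) (w : Bicomplex) : Bicomplex :=
  -((dag3 (F w) * dOmDag3 G w - dOmDag3 F w * dag3 (G w)) / denom3 F G w)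

def bCoef3₃ (F G : Bicomplex → Bicomplex) (w : Bicomplex) : Bicomplex :=
  (F w * dOmDag3 G w - dOmDag3 F w * G w) / denom3 F G w

def Acoef3 (F G : Bicomplex → Bicomplex) (w : Bicomplex) : Bicomplex :=
  -((dag3 (F w) * dOm G w - dOm F w * dag3 (G w)) / denom3 F G w)

def Bcoef3 (F G : Bicomplex → Bicomplex) (w : Bicomplex) : Bicomplex :=
  (F w * dOm G w - dOm F w * G w) / denom3 F G w

/-! Classical (Bers) pseudoanalytic function theory in `ℂ(i₁)`. -/

/-- A complex (in `i₁`) generating pair on `D ⊆ ℂ(i₁)`. -/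
def ComplexGenPair (Fe Ge : ℂ → ℂ) (D : Set ℂ) : Prop :=
  ContDiffOn ℝ 2 Fe D ∧ ContDiffOn ℝ 2 Ge D ∧
    ∀ z ∈ D, ((starRingEnd ℂ) (Fe z) * Ge z).im ≠ 0

/-- The unique real `λ₀` with `w(z₀) = λ₀ F(z₀) + μ₀ G(z₀)`. -/
def lamBers (Fe Ge we : ℂ → ℂ) (z₀ : ℂ) : ℝ :=
  ((starRingEnd ℂ) (we z₀) * Ge z₀).im / ((starRingEnd ℂ) (Fe z₀) * Ge z₀).im

/-- The unique real `μ₀` with `w(z₀) = λ₀ F(z₀) + μ₀ G(z₀)`. -/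
def muBers (Fe Ge we : ℂ → ℂ) (z₀ : ℂ) : ℝ :=
  -(((starRingEnd ℂ) (we z₀) * Fe z₀).im / ((starRingEnd ℂ) (Fe z₀) * Ge z₀).im)

/-- `w_e` has Bers `(F_e,G_e)`-derivative `d` at `z₀`. -/
def HasBersDerivAt (Fe Ge we : ℂ → ℂ) (d z₀ : ℂ) : Prop :=
  Tendsto
    (fun z => (we z - (lamBers Fe Ge we z₀ : ℂ) * Fe z - (muBers Fe Ge we z₀ : ℂ) * Ge z)
        / (z - z₀))
    (𝓝[≠] z₀) (𝓝 d)

/-- `w_e` is `(F_e,G_e)`-pseudoanalytic (in the sense of Bers) on `D`. -/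
def BersPseudoanalyticOn (Fe Ge we : ℂ → ℂ) (D : Set ℂ) : Prop :=
  ∀ z ∈ D, ∃ d, HasBersDerivAt Fe Ge we d z

/-- `∂_z̄ = ½(∂ₓ + i ∂_y)` for functions `ℂ(i₁) → ℂ(i₁)`. -/
def dzbarC (g : ℂ → ℂ) (z : ℂ) : ℂ :=
  (deriv (fun t : ℝ => g (z + t)) 0 + Complex.I * deriv (fun t : ℝ => g (z + t * Complex.I)) 0) / 2

/-- The Bers characteristic coefficient `a_{(F_e,G_e)}`. -/
def aBers (Fe Ge : ℂ → ℂ) (z : ℂ) : ℂ :=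
  -(((starRingEnd ℂ) (Fe z) * dzbarC Ge z - dzbarC Fe z * (starRingEnd ℂ) (Ge z)) /
    (Fe z * (starRingEnd ℂ) (Ge z) - (starRingEnd ℂ) (Fe z) * Ge z))

/-- The Bers characteristic coefficient `b_{(F_e,G_e)}`. -/
def bBers (Fe Ge : ℂ → ℂ) (z : ℂ) : ℂ :=
  (Fe z * dzbarC Ge z - dzbarC Fe z * Ge z) /
    (Fe z * (starRingEnd ℂ) (Ge z) - (starRingEnd ℂ) (Fe z) * Ge z)

/-- `(F, G)` is the `i₂e`-generating pair associated to complex generating pairs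
`(F_{e1}, G_{e1})` on `D₁` and `(F_{e2}, G_{e2})` on `D₂`. -/
def I2eGenPair (Fe1 Ge1 Fe2 Ge2 : ℂ → ℂ) (D₁ D₂ : Set ℂ)
    (F G : Bicomplex → Bicomplex) : Prop :=
  ComplexGenPair Fe1 Ge1 D₁ ∧ ComplexGenPair Fe2 Ge2 D₂ ∧
  (∀ w, F w = ofComplex (Fe1 (P1 w)) * e1 + ofComplex (Fe2 (P2 w)) * e2) ∧
  (∀ w, G w = ofComplex (Ge1 (P1 w)) * e1 + ofComplex (Ge2 (P2 w)) * e2)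

/-! ### Auxiliary lemmas for Statement 12 -/

section Aux

@[simp] lemma sub_z1' (w v : Bicomplex) : (w - v).z1 = w.z1 - v.z1 := by
  rw [sub_eq_add_neg, add_z1, neg_z1, ← sub_eq_add_neg]

@[simp] lemma sub_z2' (w v : Bicomplex) : (w - v).z2 = w.z2 - v.z2 := by
  rw [sub_eq_add_neg, add_z2, neg_z2, ← sub_eq_add_neg]

lemma inv_z1' (w : Bicomplex) : (w⁻¹).z1 = w.z1 / (w.z1 ^ 2 + w.z2 ^ 2) := rfl
lemma inv_z2' (w : Bicomplex) : (w⁻¹).z2 = -w.z2 / (w.z1 ^ 2 + w.z2 ^ 2) := rfl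

lemma div_def' (w v : Bicomplex) : w / v = w * v⁻¹ := rfl

lemma P1_add (w v : Bicomplex) : P1 (w + v) = P1 w + P1 v := by simp [P1]; ring
lemma P2_add (w v : Bicomplex) : P2 (w + v) = P2 w + P2 v := by simp [P2]; ring
lemma P1_sub (w v : Bicomplex) : P1 (w - v) = P1 w - P1 v := by simp [P1]; ring
lemma P2_sub (w v : Bicomplex) : P2 (w - v) = P2 w - P2 v := by simp [P2]; ring

lemma P1_mul (w v : Bicomplex) : P1 (w * v) = P1 w * P1 v := by
  simp only [P1, mul_z1, mul_z2]
  linear_combination (-(w.z2 * v.z2) : ℂ) * Complex.I_sq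

lemma P2_mul (w v : Bicomplex) : P2 (w * v) = P2 w * P2 v := by
  simp only [P2, mul_z1, mul_z2]
  linear_combination (-(w.z2 * v.z2) : ℂ) * Complex.I_sq

lemma quad_eq (w : Bicomplex) : w.z1 ^ 2 + w.z2 ^ 2 = P1 w * P2 w := by
  simp only [P1, P2]
  linear_combination ((w.z2 ^ 2) : ℂ) * Complex.I_sq

lemma P1_one : P1 (1 : Bicomplex) = 1 := by simp [P1]
lemma P2_one : P2 (1 : Bicomplex) = 1 := by simp [P2]

lemma inv_mul_self' (w : Bicomplex) (hq : w.z1 ^ 2 + w.z2 ^ 2 ≠ 0) : w⁻¹ * w = 1 := by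
  ext
  · simp only [mul_z1, inv_z1', inv_z2', one_z1]
    field_simp
    ring
  · simp only [mul_z2, inv_z1', inv_z2', one_z2]
    field_simp
    ring

lemma P1_inv (w : Bicomplex) (h1 : P1 w ≠ 0) (h2 : P2 w ≠ 0) : P1 w⁻¹ = (P1 w)⁻¹ := by
  have hq : w.z1 ^ 2 + w.z2 ^ 2 ≠ 0 := by rw [quad_eq]; exact mul_ne_zero h1 h2
  have key : P1 w⁻¹ * P1 w = 1 := by
    rw [← P1_mul, inv_mul_self' w hq, P1_one]
  exact eq_inv_of_mul_eq_one_left key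

lemma P2_inv (w : Bicomplex) (h1 : P1 w ≠ 0) (h2 : P2 w ≠ 0) : P2 w⁻¹ = (P2 w)⁻¹ := by
  have hq : w.z1 ^ 2 + w.z2 ^ 2 ≠ 0 := by rw [quad_eq]; exact mul_ne_zero h1 h2
  have key : P2 w⁻¹ * P2 w = 1 := by
    rw [← P2_mul, inv_mul_self' w hq, P2_one]
  exact eq_inv_of_mul_eq_one_left key

lemma P1_div (w v : Bicomplex) (h1 : P1 v ≠ 0) (h2 : P2 v ≠ 0) :
    P1 (w / v) = P1 w / P1 v := by
  rw [div_def', P1_mul, P1_inv v h1 h2, div_eq_mul_inv]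

lemma P2_div (w v : Bicomplex) (h1 : P1 v ≠ 0) (h2 : P2 v ≠ 0) :
    P2 (w / v) = P2 w / P2 v := by
  rw [div_def', P2_mul, P2_inv v h1 h2, div_eq_mul_inv]

lemma P1_ofComplex (c : ℂ) : P1 (ofComplex c) = c := by simp [P1, ofComplex]
lemma P2_ofComplex (c : ℂ) : P2 (ofComplex c) = c := by simp [P2, ofComplex]

lemma P1_e1 : P1 e1 = 1 := by
  simp only [P1, e1]
  linear_combination (-(1:ℂ)/2) * Complex.I_sq
lemma P2_e1 : P2 e1 = 0 := by
  simp only [P2, e1]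
  linear_combination ((1:ℂ)/2) * Complex.I_sq
lemma P1_e2 : P1 e2 = 0 := by
  simp only [P1, e2]
  linear_combination ((1:ℂ)/2) * Complex.I_sq
lemma P2_e2 : P2 e2 = 1 := by
  simp only [P2, e2]
  linear_combination (-(1:ℂ)/2) * Complex.I_sq

lemma P1_comb (a b : ℂ) : P1 (ofComplex a * e1 + ofComplex b * e2) = a := by
  rw [P1_add, P1_mul, P1_mul, P1_ofComplex, P1_ofComplex, P1_e1, P1_e2]; ring

lemma P2_comb (a b : ℂ) : P2 (ofComplex a * e1 + ofComplex b * e2) = b := by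
  rw [P2_add, P2_mul, P2_mul, P2_ofComplex, P2_ofComplex, P2_e1, P2_e2]; ring

lemma eta_comb (w : Bicomplex) :
    ofComplex (P1 w) * e1 + ofComplex (P2 w) * e2 = w := by
  ext
  · simp [ofComplex, e1, e2, P1, P2]; ring
  · simp only [add_z2, mul_z2, ofComplex, e1, e2, P1, P2]
    linear_combination (-(w.z2) : ℂ) * Complex.I_sq

lemma P1_ofHyp (a : ℝ × ℝ) : P1 (ofHyp a) = ((a.1 + a.2 : ℝ) : ℂ) := by
  simp only [P1, ofHyp]
  push_cast
  linear_combination (-(a.2 : ℂ)) * Complex.I_sq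

lemma P2_ofHyp (a : ℝ × ℝ) : P2 (ofHyp a) = ((a.1 - a.2 : ℝ) : ℂ) := by
  simp only [P2, ofHyp]
  push_cast
  linear_combination ((a.2 : ℂ)) * Complex.I_sq

/-- The inverse of `w ↦ (P1 w, P2 w)`. -/
def iotaP (p : ℂ × ℂ) : Bicomplex := ⟨(p.1 + p.2) / 2, (p.1 - p.2) * Complex.I / 2⟩

lemma P1_iotaP (p : ℂ × ℂ) : P1 (iotaP p) = p.1 := by
  simp only [P1, iotaP]
  linear_combination (-(p.1 - p.2)/2 : ℂ) * Complex.I_sq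

lemma P2_iotaP (p : ℂ × ℂ) : P2 (iotaP p) = p.2 := by
  simp only [P2, iotaP]
  linear_combination ((p.1 - p.2)/2 : ℂ) * Complex.I_sq

lemma iotaP_P (w : Bicomplex) : iotaP (P1 w, P2 w) = w := by
  ext
  · show ((w.z1 - w.z2 * Complex.I) + (w.z1 + w.z2 * Complex.I)) / 2 = w.z1
    ring
  · simp only [iotaP, P1, P2]
    linear_combination (-(w.z2)/2 - w.z2/2 : ℂ) * Complex.I_sq

lemma continuous_toProd : Continuous toProd := continuous_induced_dom

lemma continuous_piP : Continuous (fun w : Bicomplex => (P1 w, P2 w)) := by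
  have : (fun w : Bicomplex => (P1 w, P2 w)) =
      (fun p : ℂ × ℂ => (p.1 - p.2 * Complex.I, p.1 + p.2 * Complex.I)) ∘ toProd := rfl
  rw [this]
  exact (by fun_prop : Continuous fun p : ℂ × ℂ =>
    (p.1 - p.2 * Complex.I, p.1 + p.2 * Complex.I)).comp continuous_toProd

lemma continuous_iotaP : Continuous iotaP := by
  apply continuous_induced_rng.2
  have : toProd ∘ iotaP =
      fun p : ℂ × ℂ => ((p.1 + p.2) / 2, (p.1 - p.2) * Complex.I / 2) := rfl
  rw [this]; fun_prop

/-- The idempotent coordinates as a homeomorphism. -/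
def piHomeo : Bicomplex ≃ₜ ℂ × ℂ where
  toFun w := (P1 w, P2 w)
  invFun := iotaP
  left_inv w := iotaP_P w
  right_inv p := by rw [Prod.ext_iff]; exact ⟨P1_iotaP p, P2_iotaP p⟩
  continuous_toFun := continuous_piP
  continuous_invFun := continuous_iotaP

lemma continuous_P1 : Continuous P1 := continuous_fst.comp continuous_piP
lemma continuous_P2 : Continuous P2 := continuous_snd.comp continuous_piP

lemma invertibleDiff_eq (ω₀ : Bicomplex) :
    invertibleDiff ω₀ =
      (fun w : Bicomplex => (P1 w, P2 w)) ⁻¹' (({P1 ω₀}ᶜ : Set ℂ) ×ˢ ({P2 ω₀}ᶜ : Set ℂ)) := by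
  ext w
  simp only [invertibleDiff, Set.mem_setOf_eq, Set.mem_preimage, Set.mem_prod,
    Set.mem_compl_iff, Set.mem_singleton_iff]
  rw [quad_eq, mul_ne_zero_iff, P1_sub, P2_sub, sub_ne_zero, sub_ne_zero]

lemma map_piP_nhdsWithin (ω₀ : Bicomplex) :
    map (fun w : Bicomplex => (P1 w, P2 w)) (𝓝[invertibleDiff ω₀] ω₀) =
      𝓝[≠] (P1 ω₀) ×ˢ 𝓝[≠] (P2 ω₀) := by
  have h1 : map (fun w : Bicomplex => (P1 w, P2 w)) (𝓝[invertibleDiff ω₀] ω₀) =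
      𝓝[(fun w : Bicomplex => (P1 w, P2 w)) '' invertibleDiff ω₀] (P1 ω₀, P2 ω₀) :=
    piHomeo.isEmbedding.map_nhdsWithin_eq _ ω₀
  rw [h1, invertibleDiff_eq]
  have h2 : (fun w : Bicomplex => (P1 w, P2 w)) ''
      ((fun w : Bicomplex => (P1 w, P2 w)) ⁻¹' (({P1 ω₀}ᶜ : Set ℂ) ×ˢ ({P2 ω₀}ᶜ : Set ℂ)))
      = ({P1 ω₀}ᶜ : Set ℂ) ×ˢ ({P2 ω₀}ᶜ : Set ℂ) :=
    Set.image_preimage_eq _ piHomeo.surjective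
  rw [h2, nhdsWithin_prod_eq]

lemma tendsto_invertibleDiff_iff {α : Type*} (f : Bicomplex → α) (l : Filter α)
    (ω₀ : Bicomplex) :
    Tendsto f (𝓝[invertibleDiff ω₀] ω₀) l ↔
      Tendsto (f ∘ iotaP) (𝓝[≠] (P1 ω₀) ×ˢ 𝓝[≠] (P2 ω₀)) l := by
  rw [← map_piP_nhdsWithin, tendsto_map'_iff]
  apply tendsto_congr
  intro w
  simp [Function.comp, iotaP_P]

/-- Cramer representation identity. -/
lemma bers_repr (Fv Gv wv : ℂ) (h : ((starRingEnd ℂ) Fv * Gv).im ≠ 0) :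
    ((((starRingEnd ℂ) wv * Gv).im / ((starRingEnd ℂ) Fv * Gv).im : ℝ) : ℂ) * Fv +
      ((-(((starRingEnd ℂ) wv * Fv).im / ((starRingEnd ℂ) Fv * Gv).im) : ℝ) : ℂ) * Gv = wv := by
  have key : ((((starRingEnd ℂ) wv * Gv).im : ℝ) : ℂ) * Fv -
      ((((starRingEnd ℂ) wv * Fv).im : ℝ) : ℂ) * Gv =
      ((((starRingEnd ℂ) Fv * Gv).im : ℝ) : ℂ) * wv := by
    apply Complex.ext <;>
      simp only [Complex.sub_re, Complex.sub_im, Complex.mul_re, Complex.mul_im,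
        Complex.ofReal_re, Complex.ofReal_im, Complex.conj_re, Complex.conj_im] <;>
      ring
  have hk : ((((starRingEnd ℂ) Fv * Gv).im : ℝ) : ℂ) ≠ 0 := Complex.ofReal_ne_zero.2 h
  rw [Complex.ofReal_neg, Complex.ofReal_div, Complex.ofReal_div]
  have h2 : (((((starRingEnd ℂ) wv * Gv).im : ℝ) : ℂ) * Fv -
      ((((starRingEnd ℂ) wv * Fv).im : ℝ) : ℂ) * Gv) / ((((starRingEnd ℂ) Fv * Gv).im : ℝ) : ℂ)
      = wv := by
    rw [key]; exact mul_div_cancel_left₀ _ hk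
  linear_combination h2

/-- Sums and differences through hyperbolic division. -/
lemma hdiv_sum (a b : ℝ × ℝ) (h1 : b.1 + b.2 ≠ 0) (h2 : b.1 - b.2 ≠ 0) :
    (hdiv a b).1 + (hdiv a b).2 = (a.1 + a.2) / (b.1 + b.2) := by
  have hD : b.1 ^ 2 - b.2 ^ 2 ≠ 0 := by
    intro h; apply h1
    have : (b.1 + b.2) * (b.1 - b.2) = 0 := by linear_combination h
    rcases mul_eq_zero.1 this with h' | h'
    · exact h'
    · exact absurd h' h2
  simp only [hdiv, hmul]
  field_simp
  ring

lemma hdiv_diff (a b : ℝ × ℝ) (h1 : b.1 + b.2 ≠ 0) (h2 : b.1 - b.2 ≠ 0) :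
    (hdiv a b).1 - (hdiv a b).2 = (a.1 - a.2) / (b.1 - b.2) := by
  have hD : b.1 ^ 2 - b.2 ^ 2 ≠ 0 := by
    intro h; apply h1
    have : (b.1 + b.2) * (b.1 - b.2) = 0 := by linear_combination h
    rcases mul_eq_zero.1 this with h' | h'
    · exact h'
    · exact absurd h' h2
  simp only [hdiv, hmul]
  field_simp
  ring

lemma vec3_sum (X : Bicomplex) : (vec3 X).1 + (vec3 X).2 = (P1 X).im := by
  simp only [vec3, P1, Complex.sub_im, Complex.mul_im, Complex.I_re, Complex.I_im]
  ring

lemma vec3_diff (X : Bicomplex) : (vec3 X).1 - (vec3 X).2 = (P2 X).im := by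
  simp only [vec3, P2, Complex.add_im, Complex.mul_im, Complex.I_re, Complex.I_im]
  ring

lemma P1_dag3 (X : Bicomplex) : P1 (dag3 X) = (starRingEnd ℂ) (P1 X) := by
  simp only [dag3, P1, map_sub, map_mul, Complex.conj_I]
  ring

lemma P2_dag3 (X : Bicomplex) : P2 (dag3 X) = (starRingEnd ℂ) (P2 X) := by
  simp only [dag3, P2, map_sub, map_add, map_mul, Complex.conj_I]
  ring

end Aux

section Const

lemma neBot_punctured (x : ℂ) : (𝓝[≠] x).NeBot := Module.punctured_nhds_neBot ℝ ℂ x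

lemma tendsto_fst_punct (a b : ℂ) :
    Tendsto (fun p : ℂ × ℂ => p.1) (𝓝[≠] a ×ˢ 𝓝[≠] b) (𝓝 a) :=
  tendsto_fst.mono_right nhdsWithin_le_nhds

lemma stepA_tendsto {W : ℂ × ℂ → ℂ} {a b : ℂ} {h : ℂ → ℂ} {d : ℂ}
    (hc : ContinuousAt h a)
    (hq : Tendsto (fun p : ℂ × ℂ => (W p - h p.1) / (p.1 - a)) (𝓝[≠] a ×ˢ 𝓝[≠] b) (𝓝 d)) :
    Tendsto W (𝓝[≠] a ×ˢ 𝓝[≠] b) (𝓝 (h a)) := by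
  have hfst := tendsto_fst_punct a b
  have hsub : Tendsto (fun p : ℂ × ℂ => p.1 - a) (𝓝[≠] a ×ˢ 𝓝[≠] b) (𝓝 0) := by
    simpa using hfst.sub_const a
  have hmul : Tendsto (fun p : ℂ × ℂ => (W p - h p.1) / (p.1 - a) * (p.1 - a))
      (𝓝[≠] a ×ˢ 𝓝[≠] b) (𝓝 0) := by
    simpa using hq.mul hsub
  have hne : ∀ᶠ p : ℂ × ℂ in 𝓝[≠] a ×ˢ 𝓝[≠] b, p.1 ≠ a :=
    (eventually_mem_nhdsWithin (a := a) (s := {a}ᶜ)).prod_inl _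
  have htend0 : Tendsto (fun p : ℂ × ℂ => W p - h p.1) (𝓝[≠] a ×ˢ 𝓝[≠] b) (𝓝 0) := by
    apply hmul.congr'
    filter_upwards [hne] with p hp
    rw [div_mul_cancel₀ _ (sub_ne_zero.2 hp)]
  have hh : Tendsto (fun p : ℂ × ℂ => h p.1) (𝓝[≠] a ×ˢ 𝓝[≠] b) (𝓝 (h a)) :=
    hc.tendsto.comp hfst
  simpa using htend0.add hh

lemma const_in_snd {D₁ D₂ : Set ℂ} (hD₂ : IsOpen D₂) (hpc : IsPreconnected D₂)
    (W : ℂ × ℂ → ℂ)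
    (H : ∀ a ∈ D₁, ∀ b ∈ D₂, ∃ h : ℂ → ℂ, ∃ d : ℂ, ContinuousAt h a ∧ h a = W (a, b) ∧
      Tendsto (fun p : ℂ × ℂ => (W p - h p.1) / (p.1 - a)) (𝓝[≠] a ×ˢ 𝓝[≠] b) (𝓝 d)) :
    ∀ a ∈ D₁, ∀ b ∈ D₂, ∀ b' ∈ D₂, W (a, b) = W (a, b') := by
  have hA : ∀ a ∈ D₁, ∀ b ∈ D₂, Tendsto W (𝓝[≠] a ×ˢ 𝓝[≠] b) (𝓝 (W (a, b))) := by
    intro a ha b hb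
    obtain ⟨h, d, hc, hab, hq⟩ := H a ha b hb
    rw [← hab]
    exact stepA_tendsto hc hq
  have hB : ∀ a ∈ D₁, ∀ b ∈ D₂, ∃ V : Set ℂ, IsOpen V ∧ b ∈ V ∧
      ∀ v ∈ V ∩ D₂, W (a, v) = W (a, b) := by
    intro a ha b hb
    obtain ⟨h, d, hc, hab, hq⟩ := H a ha b hb
    have hbd : ∀ᶠ p : ℂ × ℂ in 𝓝[≠] a ×ˢ 𝓝[≠] b, ‖(W p - h p.1) / (p.1 - a)‖ ≤ ‖d‖ + 1 :=
      hq.norm.eventually_le_const (lt_add_one _)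
    rw [eventually_prod_iff] at hbd
    obtain ⟨pa, hpa, pb, hpb, himp⟩ := hbd
    rw [eventually_nhdsWithin_iff, eventually_nhds_iff] at hpa hpb
    obtain ⟨Ua, hUa, hUao, haUa⟩ := hpa
    obtain ⟨Vb, hVb, hVbo, hbVb⟩ := hpb
    refine ⟨Vb, hVbo, hbVb, ?_⟩
    rintro v ⟨hvV, hvD⟩
    by_cases hvb : v = b
    · rw [hvb]
    haveI := neBot_punctured a
    haveI := neBot_punctured v
    have hAv := hA a ha v hvD
    have hfst := tendsto_fst_punct a v
    have h2 : Tendsto W (𝓝[≠] a ×ˢ 𝓝[≠] v) (𝓝 (h a)) := by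
      have e1 : ∀ᶠ x in 𝓝[≠] a, pa x ∧ x ≠ a := by
        filter_upwards [eventually_mem_nhdsWithin,
          (hUao.eventually_mem haUa).filter_mono nhdsWithin_le_nhds] with x hx1 hx2
        exact ⟨hUa x hx2 hx1, hx1⟩
      have e2 : ∀ᶠ y in 𝓝[≠] v, pb y := by
        have hyb : ∀ᶠ y in 𝓝 v, y ≠ b :=
          (isOpen_compl_singleton.eventually_mem (by simpa using hvb))
        filter_upwards [(hVbo.eventually_mem hvV).filter_mono nhdsWithin_le_nhds,
          hyb.filter_mono nhdsWithin_le_nhds] with y hy1 hy2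
        exact hVb y hy1 (by simpa using hy2)
      have hev : ∀ᶠ p : ℂ × ℂ in 𝓝[≠] a ×ˢ 𝓝[≠] v,
          ‖W p - h p.1‖ ≤ (‖d‖ + 1) * ‖p.1 - a‖ := by
        filter_upwards [e1.prod_mk e2] with p hp
        have hb1 := himp hp.1.1 hp.2
        calc ‖W p - h p.1‖ = ‖(W p - h p.1) / (p.1 - a)‖ * ‖p.1 - a‖ := by
              rw [← norm_mul, div_mul_cancel₀ _ (sub_ne_zero.2 hp.1.2)]
          _ ≤ (‖d‖ + 1) * ‖p.1 - a‖ :=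
              mul_le_mul_of_nonneg_right hb1 (norm_nonneg _)
      have htend0 : Tendsto (fun p : ℂ × ℂ => W p - h p.1) (𝓝[≠] a ×ˢ 𝓝[≠] v) (𝓝 0) := by
        apply squeeze_zero_norm' hev
        have h0 : Tendsto (fun p : ℂ × ℂ => ‖p.1 - a‖) (𝓝[≠] a ×ˢ 𝓝[≠] v) (𝓝 0) := by
          simpa using (hfst.sub_const a).norm
        simpa using h0.const_mul (‖d‖ + 1)
      have hh : Tendsto (fun p : ℂ × ℂ => h p.1) (𝓝[≠] a ×ˢ 𝓝[≠] v) (𝓝 (h a)) :=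
        hc.tendsto.comp hfst
      simpa using htend0.add hh
    exact (tendsto_nhds_unique hAv h2).trans hab
  intro a ha b hb b' hb'
  by_contra hne
  classical
  choose V hVopen hVmem hVeq using fun v₀ (h : v₀ ∈ D₂) => hB a ha v₀ h
  set U : Set ℂ := ⋃ (v₀ : ℂ) (h : v₀ ∈ D₂) (_ : W (a, v₀) = W (a, b)), V v₀ h with hU
  set U' : Set ℂ := ⋃ (v₀ : ℂ) (h : v₀ ∈ D₂) (_ : W (a, v₀) ≠ W (a, b)), V v₀ h with hU'
  have hUo : IsOpen U := isOpen_iUnion fun v₀ => isOpen_iUnion fun h =>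
    isOpen_iUnion fun _ => hVopen v₀ h
  have hU'o : IsOpen U' := isOpen_iUnion fun v₀ => isOpen_iUnion fun h =>
    isOpen_iUnion fun _ => hVopen v₀ h
  have hcover : D₂ ⊆ U ∪ U' := by
    intro v hv
    by_cases hc : W (a, v) = W (a, b)
    · exact Or.inl (Set.mem_iUnion.2 ⟨v, Set.mem_iUnion.2 ⟨hv, Set.mem_iUnion.2
        ⟨hc, hVmem v hv⟩⟩⟩)
    · exact Or.inr (Set.mem_iUnion.2 ⟨v, Set.mem_iUnion.2 ⟨hv, Set.mem_iUnion.2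
        ⟨hc, hVmem v hv⟩⟩⟩)
  have hUb : b ∈ D₂ ∩ U :=
    ⟨hb, Set.mem_iUnion.2 ⟨b, Set.mem_iUnion.2 ⟨hb, Set.mem_iUnion.2 ⟨rfl, hVmem b hb⟩⟩⟩⟩
  have hU'b : b' ∈ D₂ ∩ U' :=
    ⟨hb', Set.mem_iUnion.2 ⟨b', Set.mem_iUnion.2 ⟨hb', Set.mem_iUnion.2
      ⟨fun hcc => hne hcc.symm, hVmem b' hb'⟩⟩⟩⟩
  obtain ⟨x, hxD, hxU, hxU'⟩ := hpc U U' hUo hU'o hcover ⟨b, hUb⟩ ⟨b', hU'b⟩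
  obtain ⟨v₀, hv₀D, hv₀eq, hxV⟩ : ∃ v₀, ∃ h : v₀ ∈ D₂, W (a, v₀) = W (a, b) ∧ x ∈ V v₀ h := by
    simpa [hU, Set.mem_iUnion] using hxU
  obtain ⟨v₁, hv₁D, hv₁ne, hxV'⟩ : ∃ v₁, ∃ h : v₁ ∈ D₂, W (a, v₁) ≠ W (a, b) ∧ x ∈ V v₁ h := by
    simpa [hU', Set.mem_iUnion] using hxU'
  have e0 : W (a, x) = W (a, v₀) := hVeq v₀ hv₀D x ⟨hxV, hxD⟩
  have e1 : W (a, x) = W (a, v₁) := hVeq v₁ hv₁D x ⟨hxV', hxD⟩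
  exact hv₁ne (by rw [← e1, e0, hv₀eq])

end Const

end Bicomplex

open Bicomplex

/-- If `(F, G)` is an `i₂e`-generating pair on `D₀ = D₁ ×ₑ D₂` and `w` is
`(F,G)_j`-pseudoanalytic on `D₀`, then `w = w_{e1}(z₁ - z₂i₁)e₁ + w_{e2}(z₁ + z₂i₁)e₂` where
`w_{ek}` is `(F_{ek}, G_{ek})`-pseudoanalytic on `D_k` (`k = 1, 2`), and the derivatives
satisfy `ẇ = ẇ_{e1}(z₁ - z₂i₁)e₁ + ẇ_{e2}(z₁ + z₂i₁)e₂` on `D₀`. -/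
theorem pseudoanalyticJ_decomposes_into_Bers (D₁ D₂ : Set ℂ)
    (hD₁ : IsOpen D₁) (hD₂ : IsOpen D₂) (hcD₁ : IsConnected D₁) (hcD₂ : IsConnected D₂)
    (Fe1 Ge1 Fe2 Ge2 : ℂ → ℂ) (F G : Bicomplex → Bicomplex)
    (hFG : I2eGenPair Fe1 Ge1 Fe2 Ge2 D₁ D₂ F G)
    (w : Bicomplex → Bicomplex) (hw : PseudoanalyticJ F G w (eProd D₁ D₂)) :
    ∃ we1 we2 : ℂ → ℂ,
      (∀ ω ∈ eProd D₁ D₂,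
        w ω = ofComplex (we1 (P1 ω)) * e1 + ofComplex (we2 (P2 ω)) * e2) ∧
      BersPseudoanalyticOn Fe1 Ge1 we1 D₁ ∧
      BersPseudoanalyticOn Fe2 Ge2 we2 D₂ ∧
      ∀ ω ∈ eProd D₁ D₂, ∃ d1 d2 : ℂ,
        HasBersDerivAt Fe1 Ge1 we1 d1 (P1 ω) ∧
        HasBersDerivAt Fe2 Ge2 we2 d2 (P2 ω) ∧
        HasFGDerivJ F G w (ofComplex d1 * e1 + ofComplex d2 * e2) ω := by
  classical
  obtain ⟨⟨hF1, hG1, him1⟩, ⟨hF2, hG2, him2⟩, hFdef, hGdef⟩ := hFG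
  have hmem : ∀ a b : ℂ, a ∈ D₁ → b ∈ D₂ → iotaP (a, b) ∈ eProd D₁ D₂ := by
    intro a b ha hb
    refine ⟨?_, ?_⟩
    · rw [P1_iotaP]; exact ha
    · rw [P2_iotaP]; exact hb
  have hP1F : ∀ ω, P1 (F ω) = Fe1 (P1 ω) := fun ω => by rw [hFdef ω, P1_comb]
  have hP2F : ∀ ω, P2 (F ω) = Fe2 (P2 ω) := fun ω => by rw [hFdef ω, P2_comb]
  have hP1G : ∀ ω, P1 (G ω) = Ge1 (P1 ω) := fun ω => by rw [hGdef ω, P1_comb]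
  have hP2G : ∀ ω, P2 (G ω) = Ge2 (P2 ω) := fun ω => by rw [hGdef ω, P2_comb]
  set W₁ : ℂ × ℂ → ℂ := fun p => P1 (w (iotaP p)) with hW₁def
  set W₂ : ℂ × ℂ → ℂ := fun p => P2 (w (iotaP p)) with hW₂def
  have hvecs : ∀ X Y : Bicomplex, (vec3 (dag3 X * Y)).1 + (vec3 (dag3 X * Y)).2
      = ((starRingEnd ℂ) (P1 X) * P1 Y).im := by
    intro X Y; rw [vec3_sum, P1_mul, P1_dag3]
  have hvecd : ∀ X Y : Bicomplex, (vec3 (dag3 X * Y)).1 - (vec3 (dag3 X * Y)).2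
      = ((starRingEnd ℂ) (P2 X) * P2 Y).im := by
    intro X Y; rw [vec3_diff, P2_mul, P2_dag3]
  -- denominators
  have hden1 : ∀ ω₀ ∈ eProd D₁ D₂,
      (vec3 (dag3 (F ω₀) * G ω₀)).1 + (vec3 (dag3 (F ω₀) * G ω₀)).2 ≠ 0 := by
    intro ω₀ hω₀
    rw [hvecs, hP1F, hP1G]; exact him1 _ hω₀.1
  have hden2 : ∀ ω₀ ∈ eProd D₁ D₂,
      (vec3 (dag3 (F ω₀) * G ω₀)).1 - (vec3 (dag3 (F ω₀) * G ω₀)).2 ≠ 0 := by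
    intro ω₀ hω₀
    rw [hvecd, hP2F, hP2G]; exact him2 _ hω₀.2
  -- coefficient values
  have hL1val : ∀ ω₀ ∈ eProd D₁ D₂,
      ((lamJ F G w ω₀).1 + (lamJ F G w ω₀).2 : ℝ)
        = ((starRingEnd ℂ) (P1 (w ω₀)) * Ge1 (P1 ω₀)).im
          / ((starRingEnd ℂ) (Fe1 (P1 ω₀)) * Ge1 (P1 ω₀)).im := by
    intro ω₀ hω₀
    rw [lamJ, hdiv_sum _ _ (hden1 ω₀ hω₀) (hden2 ω₀ hω₀), hvecs, hvecs, hP1F, hP1G]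
  have hM1val : ∀ ω₀ ∈ eProd D₁ D₂,
      ((muJ F G w ω₀).1 + (muJ F G w ω₀).2 : ℝ)
        = -(((starRingEnd ℂ) (P1 (w ω₀)) * Fe1 (P1 ω₀)).im
          / ((starRingEnd ℂ) (Fe1 (P1 ω₀)) * Ge1 (P1 ω₀)).im) := by
    intro ω₀ hω₀
    have : ((muJ F G w ω₀).1 + (muJ F G w ω₀).2 : ℝ)
        = -((hdiv (vec3 (dag3 (w ω₀) * F ω₀)) (vec3 (dag3 (F ω₀) * G ω₀))).1
          + (hdiv (vec3 (dag3 (w ω₀) * F ω₀)) (vec3 (dag3 (F ω₀) * G ω₀))).2) := by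
      simp [muJ]; ring
    rw [this, hdiv_sum _ _ (hden1 ω₀ hω₀) (hden2 ω₀ hω₀), hvecs, hvecs, hP1F, hP1G]
  have hL2val : ∀ ω₀ ∈ eProd D₁ D₂,
      ((lamJ F G w ω₀).1 - (lamJ F G w ω₀).2 : ℝ)
        = ((starRingEnd ℂ) (P2 (w ω₀)) * Ge2 (P2 ω₀)).im
          / ((starRingEnd ℂ) (Fe2 (P2 ω₀)) * Ge2 (P2 ω₀)).im := by
    intro ω₀ hω₀
    rw [lamJ, hdiv_diff _ _ (hden1 ω₀ hω₀) (hden2 ω₀ hω₀), hvecd, hvecd, hP2F, hP2G]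
  have hM2val : ∀ ω₀ ∈ eProd D₁ D₂,
      ((muJ F G w ω₀).1 - (muJ F G w ω₀).2 : ℝ)
        = -(((starRingEnd ℂ) (P2 (w ω₀)) * Fe2 (P2 ω₀)).im
          / ((starRingEnd ℂ) (Fe2 (P2 ω₀)) * Ge2 (P2 ω₀)).im) := by
    intro ω₀ hω₀
    have : ((muJ F G w ω₀).1 - (muJ F G w ω₀).2 : ℝ)
        = -((hdiv (vec3 (dag3 (w ω₀) * F ω₀)) (vec3 (dag3 (F ω₀) * G ω₀))).1
          - (hdiv (vec3 (dag3 (w ω₀) * F ω₀)) (vec3 (dag3 (F ω₀) * G ω₀))).2) := by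
      simp [muJ]; ring
    rw [this, hdiv_diff _ _ (hden1 ω₀ hω₀) (hden2 ω₀ hω₀), hvecd, hvecd, hP2F, hP2G]
  -- representation identities
  have hrep1 : ∀ ω₀ ∈ eProd D₁ D₂,
      (((lamJ F G w ω₀).1 + (lamJ F G w ω₀).2 : ℝ) : ℂ) * Fe1 (P1 ω₀)
        + (((muJ F G w ω₀).1 + (muJ F G w ω₀).2 : ℝ) : ℂ) * Ge1 (P1 ω₀) = P1 (w ω₀) := by
    intro ω₀ hω₀
    rw [hL1val ω₀ hω₀, hM1val ω₀ hω₀]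
    exact bers_repr _ _ _ (him1 _ hω₀.1)
  have hrep2 : ∀ ω₀ ∈ eProd D₁ D₂,
      (((lamJ F G w ω₀).1 - (lamJ F G w ω₀).2 : ℝ) : ℂ) * Fe2 (P2 ω₀)
        + (((muJ F G w ω₀).1 - (muJ F G w ω₀).2 : ℝ) : ℂ) * Ge2 (P2 ω₀) = P2 (w ω₀) := by
    intro ω₀ hω₀
    rw [hL2val ω₀ hω₀, hM2val ω₀ hω₀]
    exact bers_repr _ _ _ (him2 _ hω₀.2)
  -- component limits
  have hquot1 : ∀ (ω₀ d : Bicomplex), HasFGDerivJ F G w d ω₀ →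
      Tendsto (fun p : ℂ × ℂ =>
          (W₁ p - (((lamJ F G w ω₀).1 + (lamJ F G w ω₀).2 : ℝ) : ℂ) * Fe1 p.1
            - (((muJ F G w ω₀).1 + (muJ F G w ω₀).2 : ℝ) : ℂ) * Ge1 p.1) / (p.1 - P1 ω₀))
        (𝓝[≠] (P1 ω₀) ×ˢ 𝓝[≠] (P2 ω₀)) (𝓝 (P1 d)) := by
    intro ω₀ d hd
    have hP1t : Tendsto (fun ω => P1 ((w ω - ofHyp (lamJ F G w ω₀) * F ω -
        ofHyp (muJ F G w ω₀) * G ω) / (ω - ω₀))) (𝓝[invertibleDiff ω₀] ω₀) (𝓝 (P1 d)) :=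
      (continuous_P1.tendsto d).comp hd
    rw [tendsto_invertibleDiff_iff] at hP1t
    apply hP1t.congr'
    filter_upwards [(eventually_mem_nhdsWithin (a := P1 ω₀) (s := {P1 ω₀}ᶜ)).prod_mk
      (eventually_mem_nhdsWithin (a := P2 ω₀) (s := {P2 ω₀}ᶜ))] with p hp
    have hp1 : p.1 ≠ P1 ω₀ := hp.1
    have hp2 : p.2 ≠ P2 ω₀ := hp.2
    have h1 : P1 (iotaP p - ω₀) = p.1 - P1 ω₀ := by rw [P1_sub, P1_iotaP]
    have h2 : P2 (iotaP p - ω₀) = p.2 - P2 ω₀ := by rw [P2_sub, P2_iotaP]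
    show P1 ((w (iotaP p) - ofHyp (lamJ F G w ω₀) * F (iotaP p) -
        ofHyp (muJ F G w ω₀) * G (iotaP p)) / (iotaP p - ω₀)) = _
    rw [P1_div _ _ (by rw [h1]; exact sub_ne_zero.2 hp1) (by rw [h2]; exact sub_ne_zero.2 hp2),
      h1, P1_sub, P1_sub, P1_mul, P1_mul, P1_ofHyp, P1_ofHyp, hP1F, hP1G, P1_iotaP]
  have hquot2 : ∀ (ω₀ d : Bicomplex), HasFGDerivJ F G w d ω₀ →
      Tendsto (fun p : ℂ × ℂ =>
          (W₂ p - (((lamJ F G w ω₀).1 - (lamJ F G w ω₀).2 : ℝ) : ℂ) * Fe2 p.2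
            - (((muJ F G w ω₀).1 - (muJ F G w ω₀).2 : ℝ) : ℂ) * Ge2 p.2) / (p.2 - P2 ω₀))
        (𝓝[≠] (P1 ω₀) ×ˢ 𝓝[≠] (P2 ω₀)) (𝓝 (P2 d)) := by
    intro ω₀ d hd
    have hP2t : Tendsto (fun ω => P2 ((w ω - ofHyp (lamJ F G w ω₀) * F ω -
        ofHyp (muJ F G w ω₀) * G ω) / (ω - ω₀))) (𝓝[invertibleDiff ω₀] ω₀) (𝓝 (P2 d)) :=
      (continuous_P2.tendsto d).comp hd
    rw [tendsto_invertibleDiff_iff] at hP2t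
    apply hP2t.congr'
    filter_upwards [(eventually_mem_nhdsWithin (a := P1 ω₀) (s := {P1 ω₀}ᶜ)).prod_mk
      (eventually_mem_nhdsWithin (a := P2 ω₀) (s := {P2 ω₀}ᶜ))] with p hp
    have hp1 : p.1 ≠ P1 ω₀ := hp.1
    have hp2 : p.2 ≠ P2 ω₀ := hp.2
    have h1 : P1 (iotaP p - ω₀) = p.1 - P1 ω₀ := by rw [P1_sub, P1_iotaP]
    have h2 : P2 (iotaP p - ω₀) = p.2 - P2 ω₀ := by rw [P2_sub, P2_iotaP]
    show P2 ((w (iotaP p) - ofHyp (lamJ F G w ω₀) * F (iotaP p) -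
        ofHyp (muJ F G w ω₀) * G (iotaP p)) / (iotaP p - ω₀)) = _
    rw [P2_div _ _ (by rw [h1]; exact sub_ne_zero.2 hp1) (by rw [h2]; exact sub_ne_zero.2 hp2),
      h2, P2_sub, P2_sub, P2_mul, P2_mul, P2_ofHyp, P2_ofHyp, hP2F, hP2G, P2_iotaP]
  -- continuity of the generating functions
  have hcont1 : ∀ a ∈ D₁, ∀ (c c' : ℂ),
      ContinuousAt (fun u => c * Fe1 u + c' * Ge1 u) a := by
    intro a ha c c'
    exact (continuousAt_const.mul ((hF1.continuousOn.continuousAt (hD₁.mem_nhds ha)))).add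
      (continuousAt_const.mul ((hG1.continuousOn.continuousAt (hD₁.mem_nhds ha))))
  have hcont2 : ∀ b ∈ D₂, ∀ (c c' : ℂ),
      ContinuousAt (fun v => c * Fe2 v + c' * Ge2 v) b := by
    intro b hb c c'
    exact (continuousAt_const.mul ((hF2.continuousOn.continuousAt (hD₂.mem_nhds hb)))).add
      (continuousAt_const.mul ((hG2.continuousOn.continuousAt (hD₂.mem_nhds hb))))
  -- local constancy in the second variable for W₁
  have hconst1 : ∀ a ∈ D₁, ∀ b ∈ D₂, ∀ b' ∈ D₂, W₁ (a, b) = W₁ (a, b') := by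
    apply const_in_snd hD₂ hcD₂.isPreconnected
    intro a ha b hb
    obtain ⟨d, hd⟩ := hw (iotaP (a, b)) (hmem a b ha hb)
    refine ⟨fun u => (((lamJ F G w (iotaP (a, b))).1 + (lamJ F G w (iotaP (a, b))).2 : ℝ) : ℂ)
        * Fe1 u + (((muJ F G w (iotaP (a, b))).1 + (muJ F G w (iotaP (a, b))).2 : ℝ) : ℂ)
        * Ge1 u, P1 d, hcont1 a ha _ _, ?_, ?_⟩
    · have := hrep1 (iotaP (a, b)) (hmem a b ha hb)
      rw [P1_iotaP] at this
      exact this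
    · have hq := hquot1 (iotaP (a, b)) d hd
      rw [P1_iotaP, P2_iotaP] at hq
      apply hq.congr
      intro p
      rw [sub_sub]
  have hH2 : ∀ b ∈ D₂, ∀ a ∈ D₁, ∃ h : ℂ → ℂ, ∃ dd : ℂ, ContinuousAt h b ∧
      h b = (fun p : ℂ × ℂ => W₂ (p.2, p.1)) (b, a) ∧
      Tendsto (fun p : ℂ × ℂ => ((fun q : ℂ × ℂ => W₂ (q.2, q.1)) p - h p.1) / (p.1 - b))
        (𝓝[≠] b ×ˢ 𝓝[≠] a) (𝓝 dd) := by
    intro b hb a ha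
    obtain ⟨d, hd⟩ := hw (iotaP (a, b)) (hmem a b ha hb)
    refine ⟨fun v => (((lamJ F G w (iotaP (a, b))).1 - (lamJ F G w (iotaP (a, b))).2 : ℝ) : ℂ)
        * Fe2 v + (((muJ F G w (iotaP (a, b))).1 - (muJ F G w (iotaP (a, b))).2 : ℝ) : ℂ)
        * Ge2 v, P2 d, hcont2 b hb _ _, ?_, ?_⟩
    · have := hrep2 (iotaP (a, b)) (hmem a b ha hb)
      rw [P2_iotaP] at this
      exact this
    · have hq := hquot2 (iotaP (a, b)) d hd
      rw [P1_iotaP, P2_iotaP] at hq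
      rw [Filter.prod_comm, tendsto_map'_iff]
      apply hq.congr
      intro p
      simp only [Function.comp, Prod.fst_swap, Prod.snd_swap, Prod.mk.eta]
      rw [sub_sub]
  have hconst2 : ∀ b ∈ D₂, ∀ a ∈ D₁, ∀ a' ∈ D₁, W₂ (a, b) = W₂ (a', b) := by
    have hmain := const_in_snd (D₁ := D₂) hD₁ hcD₁.isPreconnected
      (fun p : ℂ × ℂ => W₂ (p.2, p.1)) hH2
    intro b hb a ha a' ha'
    exact hmain b hb a ha a' ha'
  obtain ⟨b₀, hb₀⟩ := hcD₂.nonempty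
  obtain ⟨a₀, ha₀⟩ := hcD₁.nonempty
  have hwval1 : ∀ ω ∈ eProd D₁ D₂, P1 (w ω) = W₁ (P1 ω, b₀) := by
    intro ω hω
    have h0 : P1 (w ω) = W₁ (P1 ω, P2 ω) := by
      show P1 (w ω) = P1 (w (iotaP (P1 ω, P2 ω)))
      rw [iotaP_P]
    rw [h0]
    exact hconst1 (P1 ω) hω.1 (P2 ω) hω.2 b₀ hb₀
  have hwval2 : ∀ ω ∈ eProd D₁ D₂, P2 (w ω) = W₂ (a₀, P2 ω) := by
    intro ω hω
    have h0 : P2 (w ω) = W₂ (P1 ω, P2 ω) := by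
      show P2 (w ω) = P2 (w (iotaP (P1 ω, P2 ω)))
      rw [iotaP_P]
    rw [h0]
    exact hconst2 (P2 ω) hω.2 (P1 ω) hω.1 a₀ ha₀
  -- the Bers derivative transfer
  have hbers1 : ∀ ω₀ ∈ eProd D₁ D₂, ∀ d, HasFGDerivJ F G w d ω₀ →
      HasBersDerivAt Fe1 Ge1 (fun u => W₁ (u, b₀)) (P1 d) (P1 ω₀) := by
    intro ω₀ hω₀ d hd
    haveI := neBot_punctured (P2 ω₀)
    have hcastL : (lamBers Fe1 Ge1 (fun u => W₁ (u, b₀)) (P1 ω₀) : ℝ)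
        = ((lamJ F G w ω₀).1 + (lamJ F G w ω₀).2 : ℝ) := by
      rw [lamBers, hL1val ω₀ hω₀, hwval1 ω₀ hω₀]
    have hcastM : (muBers Fe1 Ge1 (fun u => W₁ (u, b₀)) (P1 ω₀) : ℝ)
        = ((muJ F G w ω₀).1 + (muJ F G w ω₀).2 : ℝ) := by
      rw [muBers, hM1val ω₀ hω₀, hwval1 ω₀ hω₀]
    have hq := hquot1 ω₀ d hd
    have hq' : Tendsto (fun p : ℂ × ℂ =>
        (W₁ (p.1, b₀) - (((lamJ F G w ω₀).1 + (lamJ F G w ω₀).2 : ℝ) : ℂ) * Fe1 p.1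
          - (((muJ F G w ω₀).1 + (muJ F G w ω₀).2 : ℝ) : ℂ) * Ge1 p.1) / (p.1 - P1 ω₀))
        (𝓝[≠] (P1 ω₀) ×ˢ 𝓝[≠] (P2 ω₀)) (𝓝 (P1 d)) := by
      apply hq.congr'
      filter_upwards [((hD₁.eventually_mem hω₀.1).filter_mono nhdsWithin_le_nhds).prod_mk
        ((hD₂.eventually_mem hω₀.2).filter_mono nhdsWithin_le_nhds)] with p hp
      rw [show W₁ p = W₁ (p.1, p.2) from rfl, hconst1 p.1 hp.1 p.2 hp.2 b₀ hb₀]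
    have hg : Tendsto (fun u : ℂ =>
        (W₁ (u, b₀) - (((lamJ F G w ω₀).1 + (lamJ F G w ω₀).2 : ℝ) : ℂ) * Fe1 u
          - (((muJ F G w ω₀).1 + (muJ F G w ω₀).2 : ℝ) : ℂ) * Ge1 u) / (u - P1 ω₀))
        (𝓝[≠] (P1 ω₀)) (𝓝 (P1 d)) := by
      rw [← map_fst_prod (𝓝[≠] (P1 ω₀)) (𝓝[≠] (P2 ω₀)), tendsto_map'_iff]
      exact hq'
    apply hg.congr
    intro u
    rw [hcastL, hcastM]
  have hbers2 : ∀ ω₀ ∈ eProd D₁ D₂, ∀ d, HasFGDerivJ F G w d ω₀ →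
      HasBersDerivAt Fe2 Ge2 (fun v => W₂ (a₀, v)) (P2 d) (P2 ω₀) := by
    intro ω₀ hω₀ d hd
    haveI := neBot_punctured (P1 ω₀)
    have hcastL : (lamBers Fe2 Ge2 (fun v => W₂ (a₀, v)) (P2 ω₀) : ℝ)
        = ((lamJ F G w ω₀).1 - (lamJ F G w ω₀).2 : ℝ) := by
      rw [lamBers, hL2val ω₀ hω₀, hwval2 ω₀ hω₀]
    have hcastM : (muBers Fe2 Ge2 (fun v => W₂ (a₀, v)) (P2 ω₀) : ℝ)
        = ((muJ F G w ω₀).1 - (muJ F G w ω₀).2 : ℝ) := by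
      rw [muBers, hM2val ω₀ hω₀, hwval2 ω₀ hω₀]
    have hq := hquot2 ω₀ d hd
    have hq' : Tendsto (fun p : ℂ × ℂ =>
        (W₂ (a₀, p.2) - (((lamJ F G w ω₀).1 - (lamJ F G w ω₀).2 : ℝ) : ℂ) * Fe2 p.2
          - (((muJ F G w ω₀).1 - (muJ F G w ω₀).2 : ℝ) : ℂ) * Ge2 p.2) / (p.2 - P2 ω₀))
        (𝓝[≠] (P1 ω₀) ×ˢ 𝓝[≠] (P2 ω₀)) (𝓝 (P2 d)) := by
      apply hq.congr'
      filter_upwards [((hD₁.eventually_mem hω₀.1).filter_mono nhdsWithin_le_nhds).prod_mk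
        ((hD₂.eventually_mem hω₀.2).filter_mono nhdsWithin_le_nhds)] with p hp
      rw [show W₂ p = W₂ (p.1, p.2) from rfl, hconst2 p.2 hp.2 p.1 hp.1 a₀ ha₀]
    have hg : Tendsto (fun v : ℂ =>
        (W₂ (a₀, v) - (((lamJ F G w ω₀).1 - (lamJ F G w ω₀).2 : ℝ) : ℂ) * Fe2 v
          - (((muJ F G w ω₀).1 - (muJ F G w ω₀).2 : ℝ) : ℂ) * Ge2 v) / (v - P2 ω₀))
        (𝓝[≠] (P2 ω₀)) (𝓝 (P2 d)) := by
      rw [← map_snd_prod (𝓝[≠] (P1 ω₀)) (𝓝[≠] (P2 ω₀)), tendsto_map'_iff]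
      exact hq'
    apply hg.congr
    intro v
    rw [hcastL, hcastM]
  refine ⟨fun u => W₁ (u, b₀), fun v => W₂ (a₀, v), ?_, ?_, ?_, ?_⟩
  · intro ω hω
    show w ω = ofComplex (W₁ (P1 ω, b₀)) * e1 + ofComplex (W₂ (a₀, P2 ω)) * e2
    rw [← hwval1 ω hω, ← hwval2 ω hω, eta_comb]
  · intro u hu
    obtain ⟨d, hd⟩ := hw (iotaP (u, b₀)) (hmem u b₀ hu hb₀)
    refine ⟨P1 d, ?_⟩
    have := hbers1 (iotaP (u, b₀)) (hmem u b₀ hu hb₀) d hd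
    rwa [P1_iotaP] at this
  · intro v hv
    obtain ⟨d, hd⟩ := hw (iotaP (a₀, v)) (hmem a₀ v ha₀ hv)
    refine ⟨P2 d, ?_⟩
    have := hbers2 (iotaP (a₀, v)) (hmem a₀ v ha₀ hv) d hd
    rwa [P2_iotaP] at this
  · intro ω hω
    obtain ⟨d, hd⟩ := hw ω hω
    refine ⟨P1 d, P2 d, hbers1 ω hω d hd, hbers2 ω hω d hd, ?_⟩
    rw [eta_comb]
    exact hd
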